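/- The image of a sphere not centered on the optical axis under central projection onto a plane is in general an ellipse, not a circle: concretely, the central projection of the sphere of radius 1 centered at (d, 0, h) with h > 1 and d ≠ 0 onto the plane z = 1 is bounded by a conic that is not a circle. -/

import Mathlib

/-- The silhouette of the unit sphere centered at (d, 0, h), h > 1, d ≠ 0, under central
projection onto z = 1 lies on a conic (k−d²)X² + kY² − 2dhX + (k−h²) = 0 with
k = d² + h² − 1, whose X² and Y² coefficients differ: it is not a circle. -/
theorem sphere_projects_to_noncircular_conic (d h : ℝ) (hh : 1 < h) (hd : d ≠ 0) :
    let k : ℝ := d ^ 2 + h ^ 2 - 1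
    (∀ x y z : ℝ, z ≠ 0 →
      (x - d) ^ 2 + y ^ 2 + (z - h) ^ 2 = 1 →
      x * (x - d) + y * y + z * (z - h) = 0 →
      (k - d ^ 2) * (x / z) ^ 2 + k * (y / z) ^ 2 - 2 * d * h * (x / z) + (k - h ^ 2) = 0) ∧
      k - d ^ 2 ≠ k := by
  intro k
  constructor
  · intro x y z hz h1 h2
    have hk1 : d * x + h * z = k := by linear_combination h2 - h1
    have hk2 : x ^ 2 + y ^ 2 + z ^ 2 = k := by linear_combination h2 + hk1
    field_simp
    linear_combination k * hk2 - (d * x + h * z + k) * hk1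
  · have : d ^ 2 ≠ 0 := pow_ne_zero 2 hd
    intro hcontra
    apply this
    linarith
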